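/- Let N > 0 be a real number, let i be a node, and let 𝒢 be a finite family of finite sets (hyperedges), each containing i and each of size at least 2. For message vectors q_{j→g} ∈ ℝ^K (one for each g ∈ 𝒢 and j ∈ g∖{i}), define M_g(a) = Σ_{(t_j)_{j∈g∖{i}}∈{1,…,K}^{g∖{i}}} ((1/N)·Σ_{{r,s}⊆g, r≠s} c_{t_r t_s}) · ∏_{j∈g∖{i}} q_{j→g}(t_j) (with t_i = a), and Z = Σ_{a=1}^K n_a ∏_{g∈𝒢} M_g(a). Then, evaluated at the fixed point where q_{j→g} = n for every g ∈ 𝒢 and j ∈ g∖{i}, one has Z = ∏_{g∈𝒢} c·|g|·(|g|−1)/(2N). -/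

import Mathlib

open Finset


lemma sum_pi_prod {ι : Type*} [Fintype ι] [DecidableEq ι] {K : ℕ} (h : ι → Fin K → ℝ) :
    ∑ t : ι → Fin K, ∏ j, h j (t j) = ∏ j, ∑ b, h j b := by
  rw [Finset.prod_univ_sum, Fintype.piFinset_univ]

lemma sum_one_coord {ι : Type*} [Fintype ι] [DecidableEq ι] {K : ℕ} (n : Fin K → ℝ)
    (hn1 : ∑ b, n b = 1) (f : Fin K → ℝ) (j0 : ι) :
    ∑ t : ι → Fin K, f (t j0) * ∏ j, n (t j) = ∑ b, f b * n b := by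
  have key : ∀ t : ι → Fin K,
      f (t j0) * ∏ j, n (t j) = ∏ j, (if j = j0 then f (t j) * n (t j) else n (t j)) := by
    intro t
    rw [← Finset.prod_mul_prod_compl {j0}
        (fun j => if j = j0 then f (t j) * n (t j) else n (t j)),
      ← Finset.prod_mul_prod_compl {j0} (fun j => n (t j)),
      Finset.prod_singleton, Finset.prod_singleton, if_pos rfl]
    have hc : ∏ j ∈ ({j0} : Finset ι)ᶜ, (if j = j0 then f (t j) * n (t j) else n (t j))
        = ∏ j ∈ ({j0} : Finset ι)ᶜ, n (t j) := by
      refine Finset.prod_congr rfl fun j hj => ?_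
      simp only [Finset.mem_compl, Finset.mem_singleton] at hj
      simp [hj]
    rw [hc]; ring
  rw [Finset.sum_congr rfl (fun t _ => key t),
    sum_pi_prod (fun j b => if j = j0 then f b * n b else n b)]
  have hv : ∀ j : ι, (∑ b, if j = j0 then f b * n b else n b)
      = if j = j0 then ∑ b, f b * n b else 1 := by
    intro j; by_cases h : j = j0 <;> simp [h, hn1]
  rw [Finset.prod_congr rfl fun j _ => hv j]
  simp

lemma sum_two_coord {ι : Type*} [Fintype ι] [DecidableEq ι] {K : ℕ} (n : Fin K → ℝ)
    (hn1 : ∑ b, n b = 1) (F : Fin K → Fin K → ℝ) (r s : ι) (hrs : r ≠ s) :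
    ∑ t : ι → Fin K, F (t r) (t s) * ∏ j, n (t j)
      = ∑ b, ∑ b', F b b' * n b * n b' := by
  have expand : ∀ t : ι → Fin K, F (t r) (t s) * ∏ j, n (t j)
      = ∑ b' : Fin K, (if t s = b' then F (t r) b' else 0) * ∏ j, n (t j) := by
    intro t
    rw [← Finset.sum_mul]
    congr 1
    simp
  rw [Finset.sum_congr rfl fun t _ => expand t, Finset.sum_comm]
  rw [show (∑ b, ∑ b', F b b' * n b * n b') = ∑ b', ∑ b, F b b' * n b * n b' from
    Finset.sum_comm]
  refine Finset.sum_congr rfl fun b' _ => ?_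
  have key : ∀ t : ι → Fin K,
      (if t s = b' then F (t r) b' else 0) * ∏ j, n (t j)
        = ∏ j, (if j = r then F (t j) b' * n (t j)
            else if j = s then (if t j = b' then n (t j) else 0) else n (t j)) := by
    intro t
    rw [← Finset.prod_mul_prod_compl {r, s}
        (fun j => if j = r then F (t j) b' * n (t j)
          else if j = s then (if t j = b' then n (t j) else 0) else n (t j)),
      ← Finset.prod_mul_prod_compl {r, s} (fun j => n (t j)),
      Finset.prod_pair hrs, Finset.prod_pair hrs]
    have hc : ∏ j ∈ ({r, s} : Finset ι)ᶜ, (if j = r then F (t j) b' * n (t j)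
          else if j = s then (if t j = b' then n (t j) else 0) else n (t j))
        = ∏ j ∈ ({r, s} : Finset ι)ᶜ, n (t j) := by
      refine Finset.prod_congr rfl fun j hj => ?_
      simp only [Finset.mem_compl, Finset.mem_insert, Finset.mem_singleton, not_or] at hj
      simp [hj.1, hj.2]
    rw [hc, if_pos rfl, if_neg (Ne.symm hrs), if_pos rfl]
    by_cases h : t s = b' <;> simp [h] <;> ring
  rw [Finset.sum_congr rfl fun t _ => key t,
    sum_pi_prod (fun j b => if j = r then F b b' * n b
      else if j = s then (if b = b' then n b else 0) else n b)]
  have hv : ∀ j : ι, (∑ b, if j = r then F b b' * n b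
        else if j = s then (if b = b' then n b else 0) else n b)
      = if j = r then (∑ b, F b b' * n b) else if j = s then n b' else 1 := by
    intro j
    by_cases h1 : j = r
    · simp [h1]
    · by_cases h2 : j = s <;> simp [h1, h2, hn1]
  rw [Finset.prod_congr rfl fun j _ => hv j,
    ← Finset.prod_mul_prod_compl {r, s}, Finset.prod_pair hrs]
  have hone : ∏ j ∈ ({r, s} : Finset ι)ᶜ,
      (if j = r then (∑ b, F b b' * n b) else if j = s then n b' else 1) = 1 := by
    refine Finset.prod_eq_one fun j hj => ?_
    simp only [Finset.mem_compl, Finset.mem_insert, Finset.mem_singleton, not_or] at hj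
    simp [hj.1, hj.2]
  rw [hone, if_pos rfl, if_neg (Ne.symm hrs), if_pos rfl, mul_one]
  rw [Finset.sum_mul]

lemma card_lt_pairs {ι : Type*} [LinearOrder ι] (g : Finset ι) :
    2 * ((g ×ˢ g).filter fun rs => rs.1 < rs.2).card = g.card * (g.card - 1) := by
  classical
  set P := (g ×ˢ g).filter fun rs => rs.1 < rs.2 with hP
  set Q := (g ×ˢ g).filter fun rs => rs.2 < rs.1 with hQ
  have hPQ : P.card = Q.card := by
    refine Finset.card_bij' (fun rs _ => rs.swap) (fun rs _ => rs.swap) ?_ ?_ ?_ ?_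
    · intro rs h; simp only [hP, hQ, Finset.mem_filter, Finset.mem_product] at h ⊢
      exact ⟨⟨h.1.2, h.1.1⟩, h.2⟩
    · intro rs h; simp only [hP, hQ, Finset.mem_filter, Finset.mem_product] at h ⊢
      exact ⟨⟨h.1.2, h.1.1⟩, h.2⟩
    · intro rs _; simp
    · intro rs _; simp
  have hunion : P ∪ Q = g.offDiag := by
    ext rs
    simp only [hP, hQ, Finset.mem_union, Finset.mem_filter, Finset.mem_product,
      Finset.mem_offDiag]
    constructor
    · rintro (⟨⟨h1, h2⟩, h3⟩ | ⟨⟨h1, h2⟩, h3⟩)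
      · exact ⟨h1, h2, ne_of_lt h3⟩
      · exact ⟨h1, h2, (ne_of_lt h3).symm⟩
    · rintro ⟨h1, h2, h3⟩
      rcases lt_or_gt_of_ne h3 with h | h
      · exact Or.inl ⟨⟨h1, h2⟩, h⟩
      · exact Or.inr ⟨⟨h1, h2⟩, h⟩
  have hdisj : Disjoint P Q := by
    rw [Finset.disjoint_left]
    intro rs h1 h2
    simp only [hP, hQ, Finset.mem_filter] at h1 h2
    exact absurd h2.2 (not_lt_of_gt h1.2)
  have hcard : P.card + Q.card = g.offDiag.card := by
    rw [← Finset.card_union_of_disjoint hdisj, hunion]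
  rw [Finset.offDiag_card] at hcard
  have := Nat.mul_sub_one g.card g.card
  omega

/-- The quantity `M_g(a) = Σ_{(t_j)_{j∈g∖{i}}} ((1/N)·Σ_{{r,s}⊆g, r≠s} c_{t_r t_s}) ·
∏_{j∈g∖{i}} q_{j→g}(t_j)`, with `t_i = a`. -/
noncomputable def Mmsg {K : ℕ} {ι : Type*} [LinearOrder ι] (N : ℝ) (c : Fin K → Fin K → ℝ)
    (i : ι) (q : Finset ι → ι → Fin K → ℝ) (g : Finset ι) (a : Fin K) : ℝ :=
  ∑ t : {x // x ∈ g.erase i} → Fin K,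
    ((1 / N) * ∑ rs ∈ (g ×ˢ g).filter fun rs => rs.1 < rs.2,
        c (if h : rs.1 ∈ g.erase i then t ⟨rs.1, h⟩ else a)
          (if h : rs.2 ∈ g.erase i then t ⟨rs.2, h⟩ else a))
      * ∏ j : {x // x ∈ g.erase i}, q g j.1 (t j)

lemma Mmsg_const {K : ℕ} {ι : Type*} [LinearOrder ι]
    (c : Fin K → Fin K → ℝ) (hcsym : ∀ a b, c a b = c b a)
    (n : Fin K → ℝ) (hn1 : ∑ a, n a = 1)
    (cbar : ℝ) (hdeg : ∀ a, ∑ b, c a b * n b = cbar)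
    (N : ℝ) (hN : N ≠ 0) (i : ι) (g : Finset ι) (hig : i ∈ g) (hg2 : 2 ≤ g.card) (a : Fin K) :
    Mmsg N c i (fun _ _ b => n b) g a
      = cbar * (g.card : ℝ) * ((g.card : ℝ) - 1) / (2 * N) := by
  classical
  unfold Mmsg
  set P := (g ×ˢ g).filter fun rs => rs.1 < rs.2 with hP
  have step1 : ∀ t : {x // x ∈ g.erase i} → Fin K,
      ((1 / N) * ∑ rs ∈ P,
          c (if h : rs.1 ∈ g.erase i then t ⟨rs.1, h⟩ else a)
            (if h : rs.2 ∈ g.erase i then t ⟨rs.2, h⟩ else a))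
        * ∏ j : {x // x ∈ g.erase i}, n (t j)
      = (1 / N) * ∑ rs ∈ P,
          (c (if h : rs.1 ∈ g.erase i then t ⟨rs.1, h⟩ else a)
            (if h : rs.2 ∈ g.erase i then t ⟨rs.2, h⟩ else a)
          * ∏ j : {x // x ∈ g.erase i}, n (t j)) := by
    intro t
    rw [mul_assoc, Finset.sum_mul]
  rw [Finset.sum_congr rfl fun t _ => step1 t, ← Finset.mul_sum, Finset.sum_comm]
  have inner : ∀ rs ∈ P,
      (∑ t : {x // x ∈ g.erase i} → Fin K,
        c (if h : rs.1 ∈ g.erase i then t ⟨rs.1, h⟩ else a)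
          (if h : rs.2 ∈ g.erase i then t ⟨rs.2, h⟩ else a)
        * ∏ j : {x // x ∈ g.erase i}, n (t j)) = cbar := by
    intro rs hrs
    simp only [hP, Finset.mem_filter, Finset.mem_product] at hrs
    obtain ⟨⟨hr, hs⟩, hlt⟩ := hrs
    by_cases h1 : rs.1 = i
    · have h2 : rs.2 ≠ i := by rw [h1] at hlt; exact (ne_of_gt hlt)
      have hm2 : rs.2 ∈ g.erase i := Finset.mem_erase.mpr ⟨h2, hs⟩
      have hm1 : rs.1 ∉ g.erase i := by rw [h1]; simp
      simp only [dif_neg hm1, dif_pos hm2]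
      rw [sum_one_coord (ι := {x // x ∈ g.erase i}) n hn1 (c a) ⟨rs.2, hm2⟩]
      exact hdeg a
    · have hm1 : rs.1 ∈ g.erase i := Finset.mem_erase.mpr ⟨h1, hr⟩
      by_cases h2 : rs.2 = i
      · have hm2 : rs.2 ∉ g.erase i := by rw [h2]; simp
        simp only [dif_pos hm1, dif_neg hm2]
        rw [sum_one_coord (ι := {x // x ∈ g.erase i}) n hn1 (fun b => c b a) ⟨rs.1, hm1⟩]
        rw [← hdeg a]
        exact Finset.sum_congr rfl fun b _ => by rw [hcsym]
      · have hm2 : rs.2 ∈ g.erase i := Finset.mem_erase.mpr ⟨h2, hs⟩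
        simp only [dif_pos hm1, dif_pos hm2]
        have hne : (⟨rs.1, hm1⟩ : {x // x ∈ g.erase i}) ≠ ⟨rs.2, hm2⟩ := by
          simp only [ne_eq, Subtype.mk.injEq]
          exact ne_of_lt hlt
        rw [sum_two_coord n hn1 c _ _ hne]
        have : ∀ b, (∑ b', c b b' * n b * n b') = cbar * n b := by
          intro b
          rw [show (∑ b', c b b' * n b * n b') = (∑ b', c b b' * n b') * n b by
            rw [Finset.sum_mul]; exact Finset.sum_congr rfl fun b' _ => by ring]
          rw [hdeg b]
        rw [Finset.sum_congr rfl fun b _ => this b, ← Finset.mul_sum, hn1, mul_one]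
  rw [Finset.sum_congr rfl inner, Finset.sum_const, nsmul_eq_mul]
  have hcast : (P.card : ℝ) = (g.card : ℝ) * ((g.card : ℝ) - 1) / 2 := by
    have h := card_lt_pairs g
    have h1 : (1 : ℕ) ≤ g.card := le_trans (by norm_num) hg2
    have : (2 : ℝ) * P.card = (g.card : ℝ) * ((g.card : ℝ) - 1) := by
      have := congrArg (fun m : ℕ => (m : ℝ)) h
      push_cast [Nat.cast_sub h1] at this
      rw [← hP] at this
      linarith
    linarith
  rw [hcast]
  field_simp

/-- With `Z = Σ_a n_a ∏_{g∈𝒢} M_g(a)`, evaluated at the fixed point where all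
messages `q_{j→g}` equal `n`, one has `Z = ∏_{g∈𝒢} c·|g|·(|g|−1)/(2N)`, under the constant
expected group degree assumption `Σ_b c_{ab} n_b = c` for all `a`. -/
theorem normalizing_constant_at_fixed_point {K : ℕ} (hK : 1 ≤ K)
    (c : Fin K → Fin K → ℝ) (hcsym : ∀ a b, c a b = c b a) (hcnn : ∀ a b, 0 ≤ c a b)
    (n : Fin K → ℝ) (hn : ∀ a, 0 ≤ n a) (hn1 : ∑ a, n a = 1)
    (cbar : ℝ) (hcbar : 0 < cbar) (hdeg : ∀ a, ∑ b, c a b * n b = cbar)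
    {ι : Type*} [LinearOrder ι] (N : ℝ) (hN : 0 < N)
    (i : ι) (𝒢 : Finset (Finset ι)) (h𝒢 : ∀ g ∈ 𝒢, i ∈ g ∧ 2 ≤ g.card) :
    ∑ a, n a * ∏ g ∈ 𝒢, Mmsg N c i (fun _ _ b => n b) g a
      = ∏ g ∈ 𝒢, cbar * (g.card : ℝ) * ((g.card : ℝ) - 1) / (2 * N) := by
  have hM : ∀ a : Fin K, ∀ g ∈ 𝒢, Mmsg N c i (fun _ _ b => n b) g a
      = cbar * (g.card : ℝ) * ((g.card : ℝ) - 1) / (2 * N) := fun a g hg =>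
    Mmsg_const c hcsym n hn1 cbar hdeg N (ne_of_gt hN) i g (h𝒢 g hg).1 (h𝒢 g hg).2 a
  calc ∑ a, n a * ∏ g ∈ 𝒢, Mmsg N c i (fun _ _ b => n b) g a
      = ∑ a, n a * ∏ g ∈ 𝒢, cbar * (g.card : ℝ) * ((g.card : ℝ) - 1) / (2 * N) :=
        Finset.sum_congr rfl fun a _ => by rw [Finset.prod_congr rfl (hM a)]
    _ = (∑ a, n a) * ∏ g ∈ 𝒢, cbar * (g.card : ℝ) * ((g.card : ℝ) - 1) / (2 * N) :=
        (Finset.sum_mul _ _ _).symm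
    _ = ∏ g ∈ 𝒢, cbar * (g.card : ℝ) * ((g.card : ℝ) - 1) / (2 * N) := by
        rw [hn1, one_mul]
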